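/- Let k be a non-negative integer and let s, s' > k + 1/2. Then the remainder of the small-energy expansion of the free resolvent is o(|z|^{(k−1)/2}): for every ε > 0 there exists δ > 0 such that for every nonzero z in the closed upper half-plane with |z| < δ and every ψ ∈ L^{2,s}(ℝ), ‖R₀(z)ψ − Σ_{j=0}^{k} (i z^{1/2})^{j−1} G_j ψ‖_{−s'} ≤ ε · |z|^{(k−1)/2} · ‖ψ‖_s. -/

import Mathlib

open MeasureTheory Filter

/-- The weighted norm `‖ψ‖_s = (∫ (1+x²)^s |ψ(x)|² dx)^{1/2}`. -/
noncomputable def wnorm (s : ℝ) (ψ : ℝ → ℂ) : ℝ :=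
  (∫ x : ℝ, (1 + x ^ 2) ^ s * ‖ψ x‖ ^ 2) ^ ((1 : ℝ) / 2)

/-- Membership in the weighted space `L^{2,s}(ℝ)`. -/
def MemL2s (s : ℝ) (ψ : ℝ → ℂ) : Prop :=
  Measurable ψ ∧ Integrable (fun x : ℝ => (1 + x ^ 2) ^ s * ‖ψ x‖ ^ 2)

/-- The free resolvent `(R₀(z)ψ)(x) = −(1/(2i z^{1/2})) ∫ exp(i z^{1/2}|x−y|) ψ(y) dy`,
with the principal square root `z^{1/2}`. -/
noncomputable def R0 (z : ℂ) (ψ : ℝ → ℂ) (x : ℝ) : ℂ :=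
  -(1 / (2 * Complex.I * z ^ ((1 : ℂ) / 2))) *
    ∫ y : ℝ, Complex.exp (Complex.I * z ^ ((1 : ℂ) / 2) * ((|x - y| : ℝ) : ℂ)) * ψ y

/-- The integral operator `(G_j ψ)(x) = -(1/(2·j!)) ∫ |x-y|^j ψ(y) dy`. -/
noncomputable def Gop (j : ℕ) (ψ : ℝ → ℂ) (x : ℝ) : ℂ :=
  -(1 / (2 * (Nat.factorial j : ℂ))) * ∫ y : ℝ, ((|x - y| : ℝ) : ℂ) ^ j * ψ y

/-- Integrability of `(1+x²)^b` for `b < -1/2`. -/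
lemma intW {b : ℝ} (hb : b < -(1/2)) :
    Integrable (fun x : ℝ => (1 + x ^ 2) ^ b) := by
  have h : ((Module.finrank ℝ ℝ : ℝ)) < -(2*b) := by
    simp [Module.finrank_self]; linarith
  have H := integrable_rpow_neg_one_add_norm_sq (E := ℝ) (μ := volume) h
  have e : ∀ x : ℝ, ((1 : ℝ) + ‖x‖ ^ 2) ^ (-(-(2*b)) / 2) = (1 + x ^ 2) ^ b := by
    intro x
    rw [Real.norm_eq_abs, sq_abs]
    norm_num
  simpa [e] using H

lemma taylor_bound (k : ℕ) {η : ℝ} (hη0 : 0 < η) (hη1 : η ≤ 1) {u : ℂ} (hu : u.re ≤ 0) :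
    ‖Complex.exp u - ∑ j ∈ Finset.range (k+1), u ^ j / (j.factorial : ℂ)‖
      ≤ (k+2) * ‖u‖ ^ ((k : ℝ) + η) := by
  rcases le_or_gt (‖u‖) 1 with h1 | h1
  · rcases eq_or_ne u 0 with rfl | hu0
    · have : (∑ j ∈ Finset.range (k+1), (0:ℂ) ^ j / (j.factorial : ℂ)) = 1 := by
        rw [Finset.sum_eq_single 0]
        · simp
        · intro j _ hj; simp [zero_pow hj]
        · simp
      simp [this, Real.zero_rpow (by positivity : (k:ℝ) + η ≠ 0)]
    · have hu0' : 0 < ‖u‖ := by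
        simpa [AbsoluteValue.pos_iff] using hu0
      calc ‖Complex.exp u - ∑ j ∈ Finset.range (k+1), u ^ j / (j.factorial : ℂ)‖
          ≤ ‖u‖ ^ (k+1) * (((k+1).succ : ℝ) * (((k+1).factorial : ℝ) * ((k:ℝ)+1))⁻¹) := by
            have := Complex.exp_bound h1 (Nat.succ_pos k)
            push_cast at this ⊢
            convert this using 2 <;> push_cast <;> ring
        _ ≤ ‖u‖ ^ (k+1) * (k+2) := by
            apply mul_le_mul_of_nonneg_left _ (by positivity)
            have h2 : (1:ℝ) ≤ ((k+1).factorial : ℝ) * (k+1) := by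
              have := Nat.one_le_iff_ne_zero.2 (Nat.factorial_ne_zero (k+1))
              have h3 : (1:ℝ) ≤ ((k+1).factorial : ℝ) := by exact_mod_cast this
              have h4 : (1:ℝ) ≤ ((k:ℝ)+1) := by linarith [Nat.cast_nonneg (α := ℝ) k]
              nlinarith
            calc (((k+1).succ : ℝ)) * (((k+1).factorial : ℝ) * ((k:ℝ)+1))⁻¹
                ≤ (((k+1).succ : ℝ)) * 1 := by
                  apply mul_le_mul_of_nonneg_left _ (by positivity)
                  exact inv_le_one_of_one_le₀ h2
              _ = (k+2) := by push_cast; ring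
        _ ≤ ‖u‖ ^ ((k:ℝ) + η) * (k+2) := by
            apply mul_le_mul_of_nonneg_right _ (by positivity)
            rw [← Real.rpow_natCast (‖u‖) (k+1)]
            apply Real.rpow_le_rpow_of_exponent_ge hu0' h1
            push_cast; linarith
        _ = (k+2) * ‖u‖ ^ ((k:ℝ) + η) := by ring
  · have hexp : ‖Complex.exp u‖ ≤ 1 := by
      rw [Complex.norm_exp]
      exact Real.exp_le_one_iff.2 hu
    have hsum : ‖∑ j ∈ Finset.range (k+1), u ^ j / (j.factorial : ℂ)‖
        ≤ (k+1) * ‖u‖ ^ k := by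
      calc ‖∑ j ∈ Finset.range (k+1), u ^ j / (j.factorial : ℂ)‖
          ≤ ∑ j ∈ Finset.range (k+1), ‖u ^ j / (j.factorial : ℂ)‖ := by
            exact norm_sum_le _ _
        _ ≤ ∑ j ∈ Finset.range (k+1), ‖u‖ ^ k := by
            apply Finset.sum_le_sum
            intro j hj
            have hj' : j ≤ k := Nat.lt_succ_iff.1 (Finset.mem_range.1 hj)
            have h2 : ‖u ^ j / (j.factorial : ℂ)‖ ≤ ‖u‖ ^ j := by
              rw [norm_div, norm_pow]
              have : (1:ℝ) ≤ ‖(j.factorial : ℂ)‖ := by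
                rw [Complex.norm_natCast]
                exact_mod_cast Nat.one_le_iff_ne_zero.2 (Nat.factorial_ne_zero j)
              calc ‖u‖ ^ j / ‖(j.factorial : ℂ)‖
                  ≤ ‖u‖ ^ j / 1 := by
                    apply div_le_div_of_nonneg_left (by positivity) (by linarith) this
                _ = ‖u‖ ^ j := by ring
            exact h2.trans (pow_le_pow_right₀ (by linarith) hj')
        _ = (k+1) * ‖u‖ ^ k := by
            rw [Finset.sum_const, Finset.card_range]; push_cast; ring
    have h1k : (1:ℝ) ≤ ‖u‖ ^ k := one_le_pow₀ h1.le
    calc ‖Complex.exp u - ∑ j ∈ Finset.range (k+1), u ^ j / (j.factorial : ℂ)‖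
        ≤ ‖Complex.exp u‖
            + ‖∑ j ∈ Finset.range (k+1), u ^ j / (j.factorial : ℂ)‖ := by
          exact (norm_sub_le _ _)
      _ ≤ 1 + (k+1) * ‖u‖ ^ k := add_le_add hexp hsum
      _ ≤ (k+2) * ‖u‖ ^ k := by nlinarith
      _ ≤ (k+2) * ‖u‖ ^ ((k:ℝ) + η) := by
          apply mul_le_mul_of_nonneg_left _ (by positivity)
          rw [← Real.rpow_natCast (‖u‖) k]
          exact Real.rpow_le_rpow_of_exponent_le h1.le (by linarith)

lemma pos1 (y : ℝ) : (0:ℝ) < 1 + y ^ 2 := by positivity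

lemma weighted_CS {s c : ℝ} {ψ : ℝ → ℂ} (hψ : MemL2s s ψ) (hc : 2*c - s < -(1/2)) :
    Integrable (fun y : ℝ => (1 + y ^ 2) ^ c * ‖ψ y‖) ∧
    ∫ y : ℝ, (1 + y ^ 2) ^ c * ‖ψ y‖ ≤
      (∫ y : ℝ, (1 + y ^ 2) ^ (2*c - s)) ^ ((1:ℝ)/2) * wnorm s ψ := by
  set f : ℝ → ℝ := fun y => (1 + y ^ 2) ^ (c - s/2) with hf
  set g : ℝ → ℝ := fun y => (1 + y ^ 2) ^ (s/2) * ‖ψ y‖ with hg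
  have hfg : ∀ y, f y * g y = (1 + y ^ 2) ^ c * ‖ψ y‖ := by
    intro y
    rw [hf, hg]
    dsimp only
    rw [← mul_assoc, ← Real.rpow_add (pos1 y)]
    ring_nf
  have hf2 : ∀ y, f y ^ 2 = (1 + y ^ 2) ^ (2*c - s) := by
    intro y
    rw [hf]; dsimp only
    rw [← Real.rpow_natCast ((1 + y ^ 2) ^ (c - s/2)) 2, ← Real.rpow_mul (pos1 y).le]
    norm_num; ring_nf
  have hg2 : ∀ y, g y ^ 2 = (1 + y ^ 2) ^ s * ‖ψ y‖ ^ 2 := by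
    intro y
    rw [hg]; dsimp only
    rw [mul_pow, ← Real.rpow_natCast ((1 + y ^ 2) ^ (s/2)) 2, ← Real.rpow_mul (pos1 y).le]
    norm_num
  have mf : Measurable f := by fun_prop
  have mg : Measurable g := by
    exact (by fun_prop : Measurable fun y:ℝ => (1+y^2)^(s/2)).mul hψ.1.norm
  have hf2i : Integrable (fun y => f y ^ 2) := by
    have := intW hc
    exact this.congr (ae_of_all _ fun y => (hf2 y).symm)
  have hg2i : Integrable (fun y => g y ^ 2) := by
    exact hψ.2.congr (ae_of_all _ fun y => (hg2 y).symm)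
  have hfnn : ∀ y, 0 ≤ f y := fun y => Real.rpow_nonneg (pos1 y).le _
  have hgnn : ∀ y, 0 ≤ g y := fun y => mul_nonneg (Real.rpow_nonneg (pos1 y).le _) (norm_nonneg _)
  have hint : Integrable (fun y => f y * g y) := by
    apply Integrable.mono' ((hf2i.add hg2i).div_const 2) ((mf.mul mg).aestronglyMeasurable)
    filter_upwards with y
    simp only [Pi.add_apply]
    rw [Real.norm_eq_abs, Pi.mul_apply, abs_of_nonneg (mul_nonneg (hfnn y) (hgnn y))]
    nlinarith [sq_nonneg (f y - g y), sq_nonneg (f y + g y)]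
  constructor
  · exact hint.congr (ae_of_all _ fun y => hfg y)
  · have hconj : Real.HolderConjugate 2 2 := by
      exact Real.HolderConjugate.two_two
    have h2 : ENNReal.ofReal (2:ℝ) = 2 := by
      simp [ENNReal.ofReal_ofNat]
    have hfm : MemLp f (ENNReal.ofReal 2) volume := by
      rw [h2]
      exact (memLp_two_iff_integrable_sq mf.aestronglyMeasurable).2 hf2i
    have hgm : MemLp g (ENNReal.ofReal 2) volume := by
      rw [h2]
      exact (memLp_two_iff_integrable_sq mg.aestronglyMeasurable).2 hg2i
    have H := integral_mul_le_Lp_mul_Lq_of_nonneg hconj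
      (ae_of_all _ hfnn) (ae_of_all _ hgnn) hfm hgm
    have e1 : ∫ y, f y * g y = ∫ y : ℝ, (1 + y ^ 2) ^ c * ‖ψ y‖ :=
      integral_congr_ae (ae_of_all _ hfg)
    have erp : ∀ (h : ℝ → ℝ), (fun y => h y ^ (2:ℝ)) = fun y => h y ^ (2:ℕ) := by
      intro h; funext y
      rw [← Real.rpow_natCast (h y) 2]; norm_num
    rw [e1] at H
    calc ∫ y : ℝ, (1 + y ^ 2) ^ c * ‖ψ y‖
        ≤ (∫ y, f y ^ (2:ℝ)) ^ ((1:ℝ)/2) * (∫ y, g y ^ (2:ℝ)) ^ ((1:ℝ)/2) := H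
      _ = (∫ y : ℝ, (1 + y ^ 2) ^ (2*c - s)) ^ ((1:ℝ)/2) * wnorm s ψ := by
          have ef : (∫ y, f y ^ (2:ℝ)) = ∫ y : ℝ, (1 + y ^ 2) ^ (2*c - s) := by
            rw [erp f]; exact integral_congr_ae (ae_of_all _ hf2)
          have eg : (∫ y, g y ^ (2:ℝ)) = ∫ y : ℝ, (1 + y ^ 2) ^ s * ‖ψ y‖ ^ 2 := by
            rw [erp g]; exact integral_congr_ae (ae_of_all _ hg2)
          rw [ef, eg, wnorm]

lemma sqrt_im_nonneg {z : ℂ} (hz : z ≠ 0) (him : 0 ≤ z.im) : 0 ≤ (z ^ ((1:ℂ)/2)).im := by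
  rw [Complex.cpow_def_of_ne_zero hz, Complex.exp_im]
  apply mul_nonneg (Real.exp_nonneg _)
  have h : (Complex.log z * ((1:ℂ)/2)).im = z.arg / 2 := by
    simp [Complex.mul_im, Complex.log_im]
    ring
  rw [h]
  apply Real.sin_nonneg_of_nonneg_of_le_pi
  · have := Complex.arg_nonneg_iff.2 him
    linarith
  · have h1 := Complex.arg_le_pi z
    have h2 := Real.pi_nonneg
    linarith

lemma sqrt_abs_eq {z : ℂ} (hz : z ≠ 0) :
    ‖z ^ ((1:ℂ)/2)‖ = ‖z‖ ^ ((1:ℝ)/2) := by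
  rw [Complex.norm_cpow_of_ne_zero hz]
  simp

lemma dist_rpow_le (x y : ℝ) {c : ℝ} (hc : 0 ≤ c) :
    |x - y| ^ c ≤ (2:ℝ) ^ c * ((1 + x ^ 2) ^ (c/2) * (1 + y ^ 2) ^ (c/2)) := by
  have hx1 : (1:ℝ) ≤ Real.sqrt (1 + x ^ 2) := Real.one_le_sqrt.2 (by nlinarith)
  have hy1 : (1:ℝ) ≤ Real.sqrt (1 + y ^ 2) := Real.one_le_sqrt.2 (by nlinarith)
  have hxa : |x| ≤ Real.sqrt (1 + x ^ 2) := by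
    rw [← Real.sqrt_sq_eq_abs]
    exact Real.sqrt_le_sqrt (by nlinarith)
  have hya : |y| ≤ Real.sqrt (1 + y ^ 2) := by
    rw [← Real.sqrt_sq_eq_abs]
    exact Real.sqrt_le_sqrt (by nlinarith)
  have base : |x - y| ≤ 2 * (Real.sqrt (1 + x ^ 2) * Real.sqrt (1 + y ^ 2)) := by
    have := abs_sub x y
    nlinarith [mul_nonneg (by linarith : (0:ℝ) ≤ Real.sqrt (1+x^2) - 1)
      (by linarith : (0:ℝ) ≤ Real.sqrt (1+y^2) - 1)]
  calc |x - y| ^ c ≤ (2 * (Real.sqrt (1 + x ^ 2) * Real.sqrt (1 + y ^ 2))) ^ c :=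
        Real.rpow_le_rpow (abs_nonneg _) base hc
    _ = (2:ℝ) ^ c * ((1 + x ^ 2) ^ (c/2) * (1 + y ^ 2) ^ (c/2)) := by
        rw [Real.mul_rpow (by norm_num) (by positivity),
          Real.mul_rpow (Real.sqrt_nonneg _) (Real.sqrt_nonneg _),
          Real.sqrt_eq_rpow, Real.sqrt_eq_rpow,
          ← Real.rpow_mul (by positivity), ← Real.rpow_mul (by positivity)]
        ring_nf

section Key

variable {z : ℂ} {ψ : ℝ → ℂ} {s : ℝ} {k : ℕ}

/-- integrability of the exponential-kernel integrand -/
lemma hIexp (hψ : MemL2s s ψ) (hs : (1:ℝ)/2 < s) {w : ℂ} (hw_re : w.re ≤ 0) (x : ℝ) :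
    Integrable (fun y : ℝ => Complex.exp (w * ((|x - y| : ℝ) : ℂ)) * ψ y) := by
  have hψi : Integrable (fun y : ℝ => ‖ψ y‖) := by
    have h := (weighted_CS hψ (c := 0) (by linarith)).1
    exact h.congr (ae_of_all _ fun y => by simp [Real.rpow_zero])
  apply Integrable.mono' hψi
  · apply Measurable.aestronglyMeasurable
    have m1 : Measurable fun y : ℝ => ((|x - y| : ℝ) : ℂ) :=
      Complex.measurable_ofReal.comp ((measurable_const.sub measurable_id).abs)
    exact (Complex.measurable_exp.comp (m1.const_mul w)).mul hψ.1
  · filter_upwards with y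
    rw [norm_mul]
    have h1 : ‖Complex.exp (w * ((|x - y| : ℝ) : ℂ))‖ ≤ 1 := by
      rw [Complex.norm_exp]
      apply Real.exp_le_one_iff.2
      have : (w * ((|x - y| : ℝ) : ℂ)).re = w.re * |x - y| := by
        simp [Complex.mul_re]
      rw [this]
      have := abs_nonneg (x - y)
      nlinarith
    calc ‖Complex.exp (w * ((|x - y| : ℝ) : ℂ))‖ * ‖ψ y‖ ≤ 1 * ‖ψ y‖ := by
          apply mul_le_mul_of_nonneg_right h1 (norm_nonneg _)
      _ = ‖ψ y‖ := one_mul _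

/-- integrability of the power-kernel integrand -/
lemma hIj (hψ : MemL2s s ψ) (hs : s > (k:ℝ) + 1/2) {w : ℂ} (x : ℝ)
    {j : ℕ} (hj : j ≤ k) :
    Integrable (fun y : ℝ => (w * ((|x - y| : ℝ) : ℂ)) ^ j / (j.factorial : ℂ) * ψ y) := by
  have hjk : (j:ℝ) ≤ k := Nat.cast_le.2 hj
  have hCS := (weighted_CS hψ (c := (j:ℝ)/2) (by linarith)).1
  apply Integrable.mono'
    ((hCS.const_mul (‖w‖ ^ j * ((2:ℝ) ^ ((j:ℝ)) * (1 + x ^ 2) ^ ((j:ℝ)/2)))))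
  · apply Measurable.aestronglyMeasurable
    have m1 : Measurable fun y : ℝ => ((|x - y| : ℝ) : ℂ) :=
      Complex.measurable_ofReal.comp ((measurable_const.sub measurable_id).abs)
    exact (((m1.const_mul w).pow_const j).div_const _).mul hψ.1
  · filter_upwards with y
    have hfac : (1:ℝ) ≤ (j.factorial : ℝ) := by
      exact_mod_cast Nat.one_le_iff_ne_zero.2 (Nat.factorial_ne_zero j)
    have e1 : ‖(w * ((|x - y| : ℝ) : ℂ)) ^ j / (j.factorial : ℂ) * ψ y‖
        = (‖w‖ * |x - y|) ^ j / (j.factorial : ℝ) * ‖ψ y‖ := by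
      rw [norm_mul, norm_div, norm_pow, norm_mul, Complex.norm_real, Real.norm_eq_abs,
        abs_abs, Complex.norm_natCast]
    rw [e1]
    have h2 : |x - y| ^ j ≤ (2:ℝ) ^ ((j:ℝ)) * ((1 + x ^ 2) ^ ((j:ℝ)/2) * (1 + y ^ 2) ^ ((j:ℝ)/2)) := by
      have := dist_rpow_le x y (c := (j:ℝ)) (Nat.cast_nonneg j)
      rwa [Real.rpow_natCast] at this
    have h3 : (‖w‖ * |x - y|) ^ j / (j.factorial : ℝ) ≤ ‖w‖ ^ j * |x - y| ^ j := by
      rw [mul_pow]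
      calc ‖w‖ ^ j * |x - y| ^ j / (j.factorial : ℝ)
          ≤ ‖w‖ ^ j * |x - y| ^ j / 1 := by
            apply div_le_div_of_nonneg_left (by positivity) (by norm_num) hfac
        _ = ‖w‖ ^ j * |x - y| ^ j := by ring
    calc (‖w‖ * |x - y|) ^ j / (j.factorial : ℝ) * ‖ψ y‖
        ≤ (‖w‖ ^ j * |x - y| ^ j) * ‖ψ y‖ := by
          apply mul_le_mul_of_nonneg_right h3 (norm_nonneg _)
      _ ≤ (‖w‖ ^ j * ((2:ℝ) ^ ((j:ℝ)) * ((1 + x ^ 2) ^ ((j:ℝ)/2) * (1 + y ^ 2) ^ ((j:ℝ)/2)))) * ‖ψ y‖ := by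
          apply mul_le_mul_of_nonneg_right _ (norm_nonneg _)
          apply mul_le_mul_of_nonneg_left h2 (by positivity)
      _ = ‖w‖ ^ j * ((2:ℝ) ^ ((j:ℝ)) * (1 + x ^ 2) ^ ((j:ℝ)/2)) * ((1 + y ^ 2) ^ ((j:ℝ)/2) * ‖ψ y‖) := by
          ring

/-- The algebraic identity for the remainder. -/
lemma key (hψ : MemL2s s ψ) (hs : s > (k:ℝ) + 1/2) {w : ℂ} (hw_ne : w ≠ 0)
    (hw_re : w.re ≤ 0) (hw : w = Complex.I * z ^ ((1:ℂ)/2)) (x : ℝ) :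
    R0 z ψ x - ∑ j ∈ Finset.range (k+1), w ^ ((j:ℤ)-1) * Gop j ψ x
      = -(1/(2*w)) * ∫ y : ℝ,
          (Complex.exp (w * ((|x - y| : ℝ) : ℂ)) -
            ∑ j ∈ Finset.range (k+1), (w * ((|x - y| : ℝ) : ℂ)) ^ j / (j.factorial : ℂ)) * ψ y := by
  have hs2 : (1:ℝ)/2 < s := by
    have : (0:ℝ) ≤ k := Nat.cast_nonneg k
    linarith
  have hIe := hIexp hψ hs2 hw_re x
  have hIsum : Integrable (fun y : ℝ =>
      ∑ j ∈ Finset.range (k+1), (w * ((|x - y| : ℝ) : ℂ)) ^ j / (j.factorial : ℂ) * ψ y) := by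
    apply integrable_finset_sum
    intro j hj
    exact hIj hψ hs x (Nat.lt_succ_iff.1 (Finset.mem_range.1 hj))
  have hR0 : R0 z ψ x = -(1/(2*w)) * ∫ y : ℝ, Complex.exp (w * ((|x - y| : ℝ) : ℂ)) * ψ y := by
    rw [R0, hw]
    congr 2
    ring
  have hstep : ∀ j ∈ Finset.range (k+1),
      w ^ ((j:ℤ)-1) * Gop j ψ x
        = -(1/(2*w)) * ∫ y : ℝ, (w * ((|x - y| : ℝ) : ℂ)) ^ j / (j.factorial : ℂ) * ψ y := by
    intro j hj
    have e1 : (fun y : ℝ => (w * ((|x - y| : ℝ) : ℂ)) ^ j / (j.factorial : ℂ) * ψ y)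
        = fun y : ℝ => (w ^ j / (j.factorial : ℂ)) * (((|x - y| : ℝ) : ℂ) ^ j * ψ y) := by
      funext y
      rw [mul_pow]
      ring
    rw [e1, integral_const_mul, Gop]
    have hfac : (j.factorial : ℂ) ≠ 0 := by
      exact_mod_cast Nat.factorial_ne_zero j
    rw [zpow_sub₀ hw_ne, zpow_natCast, zpow_one]
    field_simp
  rw [hR0, Finset.sum_congr rfl hstep, ← Finset.mul_sum,
    ← integral_finset_sum _ (fun j hj => hIj hψ hs x (Nat.lt_succ_iff.1 (Finset.mem_range.1 hj))),
    ← mul_sub, ← integral_sub hIe hIsum]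
  congr 1
  apply integral_congr_ae
  filter_upwards with y
  rw [sub_mul, Finset.sum_mul]

end Key

lemma wnorm_le_of_bound {s' a B : ℝ} (hB0 : 0 ≤ B) (h : a - s' < -(1/2)) (F : ℝ → ℂ)
    (hb : ∀ x, ‖F x‖ ≤ B * (1 + x^2) ^ (a/2)) :
    wnorm (-s') F ≤ B * (∫ x : ℝ, (1 + x^2) ^ (a - s')) ^ ((1:ℝ)/2) := by
  unfold wnorm
  have hIb : Integrable (fun x : ℝ => B^2 * (1 + x^2) ^ (a - s')) := (intW h).const_mul _
  have hmono : (∫ x : ℝ, (1 + x^2) ^ (-s') * ‖F x‖^2)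
      ≤ ∫ x : ℝ, B^2 * (1 + x^2) ^ (a - s') := by
    apply integral_mono_of_nonneg (ae_of_all _ fun x => by positivity) hIb
    filter_upwards with x
    have h1 : ‖F x‖^2 ≤ (B * (1 + x^2) ^ (a/2))^2 :=
      pow_le_pow_left₀ (norm_nonneg _) (hb x) 2
    calc (1 + x^2) ^ (-s') * ‖F x‖^2
        ≤ (1 + x^2) ^ (-s') * (B * (1 + x^2) ^ (a/2))^2 :=
          mul_le_mul_of_nonneg_left h1 (Real.rpow_nonneg (pos1 x).le _)
      _ = B^2 * (1 + x^2) ^ (a - s') := by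
          rw [mul_pow, ← Real.rpow_natCast ((1 + x^2) ^ (a/2)) 2,
            ← Real.rpow_mul (pos1 x).le,
            show a/2 * ((2:ℕ):ℝ) = a by push_cast; ring,
            mul_comm ((1 + x^2) ^ (-s')) _, mul_assoc, ← Real.rpow_add (pos1 x),
            show a + -s' = a - s' by ring]
  calc (∫ x : ℝ, (1 + x^2) ^ (-s') * ‖F x‖^2) ^ ((1:ℝ)/2)
      ≤ (∫ x : ℝ, B^2 * (1 + x^2) ^ (a - s')) ^ ((1:ℝ)/2) :=
        Real.rpow_le_rpow (integral_nonneg fun x => by positivity) hmono (by norm_num)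
    _ = B * (∫ x : ℝ, (1 + x^2) ^ (a - s')) ^ ((1:ℝ)/2) := by
        rw [integral_const_mul,
          Real.mul_rpow (sq_nonneg B)
            (integral_nonneg fun x => Real.rpow_nonneg (pos1 x).le _)]
        congr 1
        rw [← Real.rpow_natCast B 2, ← Real.rpow_mul hB0]
        norm_num

/-- The remainder of the small-energy expansion of the free resolvent up to order `k`
is `o(|z|^{(k−1)/2})` as `z → 0` in the closed upper half-plane, in the operator
norm from `L^{2,s}(ℝ)` to `L^{2,−s'}(ℝ)` with `s, s' > k + 1/2`. -/
theorem stmt5 (k : ℕ) (s s' : ℝ) (hs : s > (k : ℝ) + 1 / 2) (hs' : s' > (k : ℝ) + 1 / 2) :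
    ∀ ε > (0 : ℝ), ∃ δ > (0 : ℝ), ∀ z : ℂ, z ≠ 0 → 0 ≤ z.im → ‖z‖ < δ →
      ∀ ψ : ℝ → ℂ, MemL2s s ψ →
        wnorm (-s') (fun x : ℝ =>
            R0 z ψ x -
              ∑ j ∈ Finset.range (k + 1),
                (Complex.I * z ^ ((1 : ℂ) / 2)) ^ ((j : ℤ) - 1) * Gop j ψ x)
          ≤ ε * ‖z‖ ^ (((k : ℝ) - 1) / 2) * wnorm s ψ := by
  intro ε hε
  set D : ℝ := min (s - ((k:ℝ) + 1/2)) (s' - ((k:ℝ) + 1/2)) with hD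
  have hD0 : 0 < D := lt_min (by linarith) (by linarith)
  set η : ℝ := min 1 (D/2) with hηdef
  have hη0 : 0 < η := lt_min one_pos (by linarith)
  have hη1 : η ≤ 1 := min_le_left _ _
  have hηD : η < D := lt_of_le_of_lt (min_le_right _ _) (by linarith)
  have hηs : (k:ℝ) + η + 1/2 < s := by
    have h := min_le_left (s - ((k:ℝ) + 1/2)) (s' - ((k:ℝ) + 1/2))
    rw [← hD] at h; linarith
  have hηs' : (k:ℝ) + η + 1/2 < s' := by
    have h := min_le_right (s - ((k:ℝ) + 1/2)) (s' - ((k:ℝ) + 1/2))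
    rw [← hD] at h; linarith
  set a : ℝ := (k:ℝ) + η with hadef
  have ha0 : 0 ≤ a := add_nonneg (Nat.cast_nonneg k) hη0.le
  have haS : 2*(a/2) - s < -(1/2) := by rw [hadef]; linarith
  have haS' : a - s' < -(1/2) := by rw [hadef]; linarith
  set Js : ℝ := (∫ y : ℝ, (1 + y^2) ^ (2*(a/2) - s)) ^ ((1:ℝ)/2) with hJs
  set Js' : ℝ := (∫ x : ℝ, (1 + x^2) ^ (a - s')) ^ ((1:ℝ)/2) with hJs'
  have hJs0 : 0 ≤ Js :=
    Real.rpow_nonneg (integral_nonneg fun y => Real.rpow_nonneg (pos1 y).le _) _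
  have hJs'0 : 0 ≤ Js' :=
    Real.rpow_nonneg (integral_nonneg fun y => Real.rpow_nonneg (pos1 y).le _) _
  set C : ℝ := ((k:ℝ)+2)/2 * (2:ℝ)^a * Js * Js' with hC
  have hC0 : 0 ≤ C := by
    apply mul_nonneg (mul_nonneg (mul_nonneg (by positivity) (by positivity)) hJs0) hJs'0
  have hC1 : (0:ℝ) < C + 1 := by linarith
  clear_value D η a Js Js' C
  refine ⟨min 1 ((ε/(C+1)) ^ ((2:ℝ)/η)), lt_min one_pos (by positivity), ?_⟩
  intro z hz0 him hzlt ψ hψ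
  set w : ℂ := Complex.I * z ^ ((1:ℂ)/2) with hwdef
  have hzsq_ne : z ^ ((1:ℂ)/2) ≠ 0 := by
    intro h
    rcases (Complex.cpow_eq_zero_iff _ _).1 h with ⟨h1, _⟩
    exact hz0 h1
  have hw_ne : w ≠ 0 := mul_ne_zero Complex.I_ne_zero hzsq_ne
  have him2 := sqrt_im_nonneg hz0 him
  have hw_re : w.re ≤ 0 := by
    rw [hwdef]
    simp [Complex.mul_re]
    linarith
  have hw_abs : ‖w‖ = ‖z‖ ^ ((1:ℝ)/2) := by
    rw [hwdef, norm_mul, Complex.norm_I, one_mul, sqrt_abs_eq hz0]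
  have hzpos : 0 < ‖z‖ := by
    simpa [AbsoluteValue.pos_iff] using hz0
  have hwpos : 0 < ‖w‖ := by rw [hw_abs]; positivity
  have hCSa := weighted_CS hψ (c := a/2) haS
  rw [← hJs] at hCSa
  have hwn0 : 0 ≤ wnorm s ψ :=
    Real.rpow_nonneg (integral_nonneg fun x => by positivity) _
  set B : ℝ := 1/(2*‖w‖) *
      (((k:ℝ)+2) * ‖w‖ ^ a * ((2:ℝ)^a * Js * wnorm s ψ)) with hB
  have hB0 : 0 ≤ B := by
    apply mul_nonneg (by positivity)
    apply mul_nonneg (mul_nonneg (by positivity) (Real.rpow_nonneg hwpos.le _))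
    exact mul_nonneg (mul_nonneg (by positivity) hJs0) hwn0
  clear_value B
  have hbound : ∀ x : ℝ,
      ‖R0 z ψ x - ∑ j ∈ Finset.range (k+1), w ^ ((j:ℤ)-1) * Gop j ψ x‖
        ≤ B * (1 + x^2) ^ (a/2) := by
    intro x
    rw [key hψ hs hw_ne hw_re hwdef x]
    set Kx : ℝ := ((k:ℝ)+2) * ‖w‖ ^ a * ((2:ℝ)^a * (1 + x^2) ^ (a/2)) with hKx
    have hKx0 : 0 ≤ Kx := by
      apply mul_nonneg (mul_nonneg (by positivity) (Real.rpow_nonneg hwpos.le _))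
      positivity
    have hpt : ∀ y : ℝ,
        ‖(Complex.exp (w * ((|x - y| : ℝ) : ℂ)) -
            ∑ j ∈ Finset.range (k+1), (w * ((|x - y| : ℝ) : ℂ)) ^ j / (j.factorial : ℂ)) * ψ y‖
          ≤ Kx * ((1 + y^2) ^ (a/2) * ‖ψ y‖) := by
      intro y
      rw [norm_mul]
      have hure : (w * ((|x - y| : ℝ) : ℂ)).re ≤ 0 := by
        simp only [Complex.mul_re, Complex.ofReal_re, Complex.ofReal_im, mul_zero, sub_zero]
        nlinarith [abs_nonneg (x - y)]
      have h1 := taylor_bound k hη0 hη1 hure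
      have habs : ‖w * ((|x - y| : ℝ) : ℂ)‖ = ‖w‖ * |x - y| := by
        rw [norm_mul, Complex.norm_real, Real.norm_eq_abs, abs_abs]
      rw [habs] at h1
      have h2 : (‖w‖ * |x - y|) ^ ((k:ℝ) + η)
          = ‖w‖ ^ a * |x - y| ^ a := by
        rw [Real.mul_rpow (norm_nonneg _) (abs_nonneg _), hadef]
      rw [h2] at h1
      have h3 := dist_rpow_le x y ha0
      have h4 : ‖Complex.exp (w * ((|x - y| : ℝ) : ℂ)) -
          ∑ j ∈ Finset.range (k+1), (w * ((|x - y| : ℝ) : ℂ)) ^ j / (j.factorial : ℂ)‖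
            ≤ ((k:ℝ)+2) * (‖w‖ ^ a *
              ((2:ℝ)^a * ((1 + x^2) ^ (a/2) * (1 + y^2) ^ (a/2)))) := by
        refine h1.trans ?_
        have hwa : 0 ≤ ‖w‖ ^ a := Real.rpow_nonneg hwpos.le _
        have h5 : ‖w‖ ^ a * |x - y| ^ a ≤ ‖w‖ ^ a *
            ((2:ℝ)^a * ((1 + x^2) ^ (a/2) * (1 + y^2) ^ (a/2))) :=
          mul_le_mul_of_nonneg_left h3 hwa
        exact mul_le_mul_of_nonneg_left h5 (by positivity)
      calc ‖Complex.exp (w * ((|x - y| : ℝ) : ℂ)) -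
            ∑ j ∈ Finset.range (k+1), (w * ((|x - y| : ℝ) : ℂ)) ^ j / (j.factorial : ℂ)‖ * ‖ψ y‖
          ≤ (((k:ℝ)+2) * (‖w‖ ^ a *
              ((2:ℝ)^a * ((1 + x^2) ^ (a/2) * (1 + y^2) ^ (a/2))))) * ‖ψ y‖ :=
            mul_le_mul_of_nonneg_right h4 (norm_nonneg _)
        _ = Kx * ((1 + y^2) ^ (a/2) * ‖ψ y‖) := by rw [hKx]; ring
    have hnorm_coef : ‖-(1/(2*w))‖ = 1/(2*‖w‖) := by
      rw [norm_neg, norm_div, norm_one, norm_mul]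
      norm_num
    calc ‖-(1/(2*w)) * ∫ y : ℝ,
          (Complex.exp (w * ((|x - y| : ℝ) : ℂ)) -
            ∑ j ∈ Finset.range (k+1), (w * ((|x - y| : ℝ) : ℂ)) ^ j / (j.factorial : ℂ)) * ψ y‖
        = 1/(2*‖w‖) * ‖∫ y : ℝ,
          (Complex.exp (w * ((|x - y| : ℝ) : ℂ)) -
            ∑ j ∈ Finset.range (k+1), (w * ((|x - y| : ℝ) : ℂ)) ^ j / (j.factorial : ℂ)) * ψ y‖ := by
          rw [norm_mul, hnorm_coef]
      _ ≤ 1/(2*‖w‖) * ∫ y : ℝ,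
          ‖(Complex.exp (w * ((|x - y| : ℝ) : ℂ)) -
            ∑ j ∈ Finset.range (k+1), (w * ((|x - y| : ℝ) : ℂ)) ^ j / (j.factorial : ℂ)) * ψ y‖ := by
          apply mul_le_mul_of_nonneg_left (norm_integral_le_integral_norm _) (by positivity)
      _ ≤ 1/(2*‖w‖) * ∫ y : ℝ, Kx * ((1 + y^2) ^ (a/2) * ‖ψ y‖) := by
          apply mul_le_mul_of_nonneg_left _ (by positivity)
          apply integral_mono_of_nonneg (ae_of_all _ fun y => norm_nonneg _)
            ((hCSa.1.const_mul Kx).congr (ae_of_all _ fun y => by ring))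
          exact ae_of_all _ hpt
      _ = 1/(2*‖w‖) * (Kx * ∫ y : ℝ, (1 + y^2) ^ (a/2) * ‖ψ y‖) := by
          rw [integral_const_mul]
      _ ≤ 1/(2*‖w‖) * (Kx * (Js * wnorm s ψ)) := by
          apply mul_le_mul_of_nonneg_left _ (by positivity)
          exact mul_le_mul_of_nonneg_left hCSa.2 hKx0
      _ = B * (1 + x^2) ^ (a/2) := by rw [hKx, hB]; ring
  have hFnorm := wnorm_le_of_bound hB0 haS' _ hbound
  rw [← hJs'] at hFnorm
  refine le_trans hFnorm ?_
  have hz1 : ‖z‖ ^ (η/2) ≤ ε/(C+1) := by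
    have h1 : ‖z‖ ≤ (ε/(C+1)) ^ ((2:ℝ)/η) :=
      le_of_lt (lt_of_lt_of_le hzlt (min_le_right _ _))
    have h2 : ‖z‖ ^ (η/2) ≤ ((ε/(C+1)) ^ ((2:ℝ)/η)) ^ (η/2) :=
      Real.rpow_le_rpow (norm_nonneg z) h1 (by positivity)
    have h3 : ((ε/(C+1)) ^ ((2:ℝ)/η)) ^ (η/2) = ε/(C+1) := by
      rw [← Real.rpow_mul (by positivity),
        show (2:ℝ)/η * (η/2) = 1 by field_simp, Real.rpow_one]
    rw [h3] at h2
    exact h2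
  have hsplit : ‖w‖ ^ a = ‖w‖ ^ (a-1) * ‖w‖ := by
    have h := Real.rpow_add_one hwpos.ne' (a-1)
    rw [sub_add_cancel] at h
    exact h
  have hBJ : B * Js' = C * ‖w‖ ^ (a-1) * wnorm s ψ := by
    rw [hB, hC, hsplit]
    field_simp
  have hwpow : ‖w‖ ^ (a-1)
      = ‖z‖ ^ (η/2) * ‖z‖ ^ (((k:ℝ)-1)/2) := by
    rw [hw_abs, ← Real.rpow_mul (norm_nonneg z), ← Real.rpow_add hzpos]
    congr 1
    rw [hadef]
    ring
  calc B * Js'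
      = (C * ‖z‖ ^ (η/2)) * (‖z‖ ^ (((k:ℝ)-1)/2) * wnorm s ψ) := by
        rw [hBJ, hwpow]; ring
    _ ≤ ε * (‖z‖ ^ (((k:ℝ)-1)/2) * wnorm s ψ) := by
        apply mul_le_mul_of_nonneg_right _ (mul_nonneg (Real.rpow_nonneg hzpos.le _) hwn0)
        calc C * ‖z‖ ^ (η/2) ≤ C * (ε/(C+1)) :=
              mul_le_mul_of_nonneg_left hz1 hC0
          _ = ε * (C/(C+1)) := by ring
          _ ≤ ε * 1 := mul_le_mul_of_nonneg_left ((div_le_one hC1).2 (by linarith)) hε.le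
          _ = ε := mul_one ε
    _ = ε * ‖z‖ ^ (((k:ℝ)-1)/2) * wnorm s ψ := by ring
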